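/- Let (ξ_i)_{i≥1} be i.i.d. ℕ-valued random variables on a probability space (Ω, P) with E[ξ₁] = 1 and E[ξ₁²] < ∞, and set σ² = Var(ξ₁) and S_n = ∑_{i=1}^n ξ_i. Assume that (i) P(S_n = n−1) > 0 for all sufficiently large n, and (ii) for every measurable g : ℕ × ℕ → ℝ such that g(ξ₁, ξ₂) is integrable, the conditional expectation E[g(ξ₁, ξ₂) | S_n = n−1] converges to E[g(ξ₁, ξ₂)] as n → ∞. Then E[ | (1/n)·∑_{i=1}^n (ξ_i − 1 + 1/n)² − σ² | ; given S_n = n−1 ] → 0 as n → ∞. (This is the consistency of the empirical variance of the numbers of children in a conditioned Galton-Watson tree, via Devroye's representation of the child sequence as an i.i.d. sequence conditioned on its sum.) -/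

import Mathlib

open MeasureTheory ProbabilityTheory Filter

lemma stmt1_jointLaw {Ω : Type*} [MeasurableSpace Ω] (P : Measure Ω) [IsProbabilityMeasure P]
    (ξ : ℕ → Ω → ℕ) (hmeas : ∀ i, Measurable (ξ i))
    (hindep : iIndepFun ξ P)
    (hident : ∀ i, Measure.map (ξ i) P = Measure.map (ξ 0) P) (n : ℕ) :
    Measure.map (fun ω (i : Fin n) => ξ i ω) P
      = Measure.pi (fun _ : Fin n => Measure.map (ξ 0) P) := by
  have hΦ : Measurable (fun ω (i : Fin n) => ξ i ω) :=
    measurable_pi_lambda _ (fun i => hmeas i)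
  refine (Measure.pi_eq fun s hs => ?_).symm
  rw [Measure.map_apply hΦ (MeasurableSet.univ_pi hs)]
  classical
  set sets : ℕ → Set ℕ := fun i => if h : i < n then s ⟨i, h⟩ else Set.univ with hsets
  have hpre : (fun ω (i : Fin n) => ξ i ω) ⁻¹' Set.pi Set.univ s
      = ⋂ i ∈ Finset.range n, ξ i ⁻¹' sets i := by
    ext ω
    simp only [Set.mem_preimage, Set.mem_pi, Set.mem_univ, forall_true_left, Set.mem_iInter,
      Finset.mem_range, hsets]
    constructor
    · intro hx i hi
      simpa [hi] using hx ⟨i, hi⟩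
    · intro hx i
      simpa [i.2] using hx i i.2
  rw [hpre, hindep.measure_inter_preimage_eq_mul (Finset.range n)
    (sets := sets) (fun i hi => by
      by_cases h : i < n
      · simpa [hsets, h] using hs ⟨i, h⟩
      · simp [hsets, h])]
  rw [← Fin.prod_univ_eq_prod_range (fun i => P (ξ i ⁻¹' sets i)) n]
  refine Finset.prod_congr rfl fun i _ => ?_
  rw [← Measure.map_apply (hmeas i) (by
      by_cases h : (i : ℕ) < n
      · simpa [hsets, h] using hs ⟨i, h⟩
      · simp [hsets, h]), hident i]
  congr 1
  simp [hsets, i.2]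

lemma stmt1_exchg {Ω : Type*} [MeasurableSpace Ω] (P : Measure Ω) [IsProbabilityMeasure P]
    (ξ : ℕ → Ω → ℕ) (hmeas : ∀ i, Measurable (ξ i))
    (hindep : iIndepFun ξ P)
    (hident : ∀ i, Measure.map (ξ i) P = Measure.map (ξ 0) P)
    (n : ℕ) (e : Equiv.Perm (Fin n)) (F : (Fin n → ℕ) → ℝ) :
    ∫ ω, F (fun i => ξ (e i) ω) ∂P = ∫ ω, F (fun i => ξ i ω) ∂P := by
  have hjoint := stmt1_jointLaw P ξ hmeas hindep hident
  have hΦ : Measurable (fun ω (i : Fin n) => ξ i ω) :=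
    measurable_pi_lambda _ (fun i => hmeas i)
  have hF : Measurable F := measurable_of_countable F
  set ψ := MeasurableEquiv.piCongrLeft (fun _ : Fin n => ℕ) e.symm with hψ
  have hψapp : ∀ (x : Fin n → ℕ) (i : Fin n), ψ x i = x (e i) := by
    intro x i
    simp [hψ, MeasurableEquiv.piCongrLeft, Equiv.piCongrLeft]
  have h1 : ∫ ω, F (fun i => ξ i ω) ∂P
      = ∫ x, F x ∂(Measure.pi (fun _ : Fin n => Measure.map (ξ 0) P)) := by
    rw [← hjoint n, integral_map hΦ.aemeasurable hF.aestronglyMeasurable]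
  have hG : Measurable (fun x => F (ψ x)) := measurable_of_countable _
  have h2 : ∫ ω, F (fun i => ξ (e i) ω) ∂P
      = ∫ x, F (ψ x) ∂(Measure.map (fun ω (i : Fin n) => ξ i ω) P) := by
    rw [integral_map hΦ.aemeasurable hG.aestronglyMeasurable]
    refine integral_congr_ae (Filter.Eventually.of_forall fun ω => ?_)
    refine congrArg F ?_
    ext i
    rw [hψapp]
  rw [h2, hjoint n]
  have hmp := MeasureTheory.measurePreserving_piCongrLeft
    (fun _ : Fin n => Measure.map (ξ 0) P) e.symm
  rw [hmp.integral_comp (MeasurableEquiv.piCongrLeft _ e.symm).measurableEmbedding F, h1]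

lemma stmt1_pairExch {Ω : Type*} [MeasurableSpace Ω] (P : Measure Ω) [IsProbabilityMeasure P]
    (ξ : ℕ → Ω → ℕ) (hmeas : ∀ i, Measurable (ξ i))
    (hexch : ∀ (n : ℕ) (e : Equiv.Perm (Fin n)) (F : (Fin n → ℕ) → ℝ),
      ∫ ω, F (fun i => ξ (e i) ω) ∂P = ∫ ω, F (fun i => ξ i ω) ∂P)
    {n i j : ℕ} (hn : 2 ≤ n) (hi : i < n) (hj : j < n) (hij : i ≠ j) (F : ℕ → ℕ → ℝ) :
    ∫ ω in {ω | ∑ k ∈ Finset.range n, ξ k ω = n - 1}, F (ξ i ω) (ξ j ω) ∂P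
      = ∫ ω in {ω | ∑ k ∈ Finset.range n, ξ k ω = n - 1}, F (ξ 0 ω) (ξ 1 ω) ∂P := by
  classical
  have hAn : MeasurableSet {ω | ∑ k ∈ Finset.range n, ξ k ω = n - 1} := by
    have : Measurable (fun ω => ∑ k ∈ Finset.range n, ξ k ω) :=
      Finset.measurable_sum _ (fun k _ => hmeas k)
    exact this (measurableSet_singleton (n-1))
  set z0 : Fin n := ⟨0, by omega⟩
  set z1 : Fin n := ⟨1, by omega⟩
  set a : Fin n := ⟨i, hi⟩
  set b : Fin n := ⟨j, hj⟩
  have hab : a ≠ b := by simp [a, b, Fin.mk.injEq]; omega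
  have hz01 : z0 ≠ z1 := by simp [z0, z1, Fin.mk.injEq]
  set c : Fin n := Equiv.swap z0 a z1 with hc
  have hac : a ≠ c := by
    by_cases h : a = z1
    · have : c = z0 := by rw [hc, ← h, Equiv.swap_apply_right]
      rw [this, h]; exact hz01.symm
    · have : c = z1 := by rw [hc, Equiv.swap_apply_of_ne_of_ne hz01.symm (Ne.symm h)]
      rw [this]; exact h
  set e : Equiv.Perm (Fin n) := (Equiv.swap z0 a).trans (Equiv.swap c b) with he
  have he0 : e z0 = a := by
    rw [he]; simp only [Equiv.trans_apply, Equiv.swap_apply_left]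
    exact Equiv.swap_apply_of_ne_of_ne hac hab
  have he1 : e z1 = b := by
    rw [he]; simp only [Equiv.trans_apply]
    rw [← hc, Equiv.swap_apply_left]
  set S : Set (Fin n → ℕ) := {x | ∑ k, x k = n - 1} with hS
  set F' : (Fin n → ℕ) → ℝ := fun x => S.indicator (fun x => F (x z0) (x z1)) x with hF'
  have key := hexch n e F'
  have hL : (fun ω => F' (fun k => ξ (e k) ω))
      = Set.indicator {ω | ∑ k ∈ Finset.range n, ξ k ω = n - 1}
          (fun ω => F (ξ i ω) (ξ j ω)) := by
    ext ω
    have hsum : ∑ k : Fin n, ξ (e k) ω = ∑ k ∈ Finset.range n, ξ k ω := by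
      rw [Equiv.sum_comp e (fun k : Fin n => ξ (k : ℕ) ω)]
      exact Fin.sum_univ_eq_sum_range (fun k => ξ k ω) n
    simp only [hF', Set.indicator_apply, hS, Set.mem_setOf_eq, he0, he1, hsum]
    rfl
  have hR : (fun ω => F' (fun k => ξ k ω))
      = Set.indicator {ω | ∑ k ∈ Finset.range n, ξ k ω = n - 1}
          (fun ω => F (ξ 0 ω) (ξ 1 ω)) := by
    ext ω
    have hsum : ∑ k : Fin n, ξ (k : ℕ) ω = ∑ k ∈ Finset.range n, ξ k ω :=
      Fin.sum_univ_eq_sum_range (fun k => ξ k ω) n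
    simp only [hF', Set.indicator_apply, hS, Set.mem_setOf_eq, hsum]
    rfl
  rw [hL, hR, integral_indicator hAn, integral_indicator hAn] at key
  exact key

theorem stmt_1 {Ω : Type*} [MeasurableSpace Ω] (P : Measure Ω) [IsProbabilityMeasure P]
    (ξ : ℕ → Ω → ℕ) (hmeas : ∀ i, Measurable (ξ i))
    (hindep : iIndepFun ξ P)
    (hident : ∀ i, Measure.map (ξ i) P = Measure.map (ξ 0) P)
    (hmean : ∫ ω, (ξ 0 ω : ℝ) ∂P = 1)
    (hL2 : Integrable (fun ω => ((ξ 0 ω : ℝ)) ^ 2) P)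
    (σ2 : ℝ) (hσ2 : σ2 = variance (fun ω => (ξ 0 ω : ℝ)) P)
    (A : ℕ → Set Ω) (hA : ∀ n, A n = {ω | ∑ i ∈ Finset.range n, ξ i ω = n - 1})
    (hpos : ∀ᶠ n in atTop, 0 < P (A n))
    (hcond : ∀ g : ℕ × ℕ → ℝ, Measurable g →
      Integrable (fun ω => g (ξ 0 ω, ξ 1 ω)) P →
      Tendsto (fun n => ∫ ω, g (ξ 0 ω, ξ 1 ω) ∂(P[|A n])) atTop
        (nhds (∫ ω, g (ξ 0 ω, ξ 1 ω) ∂P))) :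
    Tendsto (fun n => ∫ ω,
        |(1 / (n : ℝ)) * ∑ i ∈ Finset.range n, ((ξ i ω : ℝ) - 1 + 1 / (n : ℝ)) ^ 2 - σ2|
        ∂(P[|A n])) atTop (nhds 0) := by
  classical
  have hAmeas : ∀ n, MeasurableSet (A n) := by
    intro n; rw [hA n]
    exact (Finset.measurable_sum (Finset.range n) (fun k _ => hmeas k))
      (measurableSet_singleton (n-1))
  have hexch := stmt1_exchg P ξ hmeas hindep hident
  have condInt : ∀ (s : Set Ω) (f : Ω → ℝ),
      ∫ ω, f ω ∂(P[|s]) = (P s)⁻¹.toReal * ∫ ω in s, f ω ∂P := by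
    intro s f
    show ∫ ω, f ω ∂((P s)⁻¹ • P.restrict s) = _
    rw [integral_smul_measure, smul_eq_mul]
  have hpair : ∀ {n i j : ℕ}, 2 ≤ n → i < n → j < n → i ≠ j → ∀ F : ℕ → ℕ → ℝ,
      ∫ ω, F (ξ i ω) (ξ j ω) ∂(P[|A n]) = ∫ ω, F (ξ 0 ω) (ξ 1 ω) ∂(P[|A n]) := by
    intro n i j hn hi hj hij F
    rw [condInt, condInt, hA n]
    congr 1
    exact stmt1_pairExch P ξ hmeas hexch hn hi hj hij F
  have hsingle : ∀ {n i : ℕ}, 2 ≤ n → i < n → ∀ f : ℕ → ℝ,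
      ∫ ω, f (ξ i ω) ∂(P[|A n]) = ∫ ω, f (ξ 0 ω) ∂(P[|A n]) := by
    intro n i hn hi f
    rcases eq_or_ne i 0 with rfl | h0
    · rfl
    · exact hpair hn hi (by omega) h0 (fun x _ => f x)
  set h : ℕ → ℝ := fun a => ((a:ℝ) - 1)^2 with hh
  have hnonneg : ∀ a : ℕ, 0 ≤ h a := fun a => sq_nonneg _
  have hmeasR : ∀ (f : ℕ → ℝ) (i : ℕ), Measurable (fun ω => f (ξ i ω)) :=
    fun f i => (measurable_of_countable f).comp (hmeas i)
  have hintMap : ∀ (f : ℕ → ℝ) (i : ℕ), Integrable (fun ω => f (ξ 0 ω)) P →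
      Integrable (fun ω => f (ξ i ω)) P := by
    intro f i hf
    have h0 : Integrable f (Measure.map (ξ 0) P) :=
      (integrable_map_measure (measurable_of_countable f).aestronglyMeasurable
        (hmeas 0).aemeasurable).mpr hf
    have h1 : Integrable f (Measure.map (ξ i) P) := by rw [hident i]; exact h0
    exact (integrable_map_measure (measurable_of_countable f).aestronglyMeasurable
      (hmeas i).aemeasurable).mp h1
  have hIntEq : ∀ (f : ℕ → ℝ) (i : ℕ), ∫ ω, f (ξ i ω) ∂P = ∫ ω, f (ξ 0 ω) ∂P := by
    intro f i
    rw [← integral_map (hmeas i).aemeasurable (measurable_of_countable f).aestronglyMeasurable,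
      hident i,
      integral_map (hmeas 0).aemeasurable (measurable_of_countable f).aestronglyMeasurable]
  have hmemL2 : MemLp (fun ω => (ξ 0 ω : ℝ)) 2 P := by
    refine (memLp_two_iff_integrable_sq
      ((hmeasR (fun a => (a:ℝ)) 0).aestronglyMeasurable)).mpr ?_
    convert hL2 using 1
  have hint1 : Integrable (fun ω => (ξ 0 ω : ℝ)) P := hmemL2.integrable one_le_two
  have hintH : Integrable (fun ω => h (ξ 0 ω)) P := by
    have hrw : (fun ω => h (ξ 0 ω)) = fun ω => (ξ 0 ω:ℝ)^2 - 2*(ξ 0 ω:ℝ) + 1 := by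
      funext ω; simp only [hh]; ring
    rw [hrw]; exact (hL2.sub (hint1.const_mul 2)).add (integrable_const 1)
  have σ2eq : σ2 = ∫ ω, h (ξ 0 ω) ∂P := by
    rw [hσ2, variance_eq_integral hmemL2.aestronglyMeasurable.aemeasurable]
    congr 1
    funext ω
    simp only [Pi.pow_apply, Pi.sub_apply, hmean, hh]
  have condIntg : ∀ {f : Ω → ℝ} {n : ℕ}, P (A n) ≠ 0 → Integrable f P →
      Integrable f (P[|A n]) := by
    intro f n hP hf
    show Integrable f ((P (A n))⁻¹ • P.restrict (A n))
    exact (hf.restrict).smul_measure (ENNReal.inv_ne_top.mpr hP)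
  have hbddc : ∀ {n : ℕ}, P (A n) ≠ 0 → ∀ (f : Ω → ℝ) (C : ℝ), Measurable f →
      (∀ ω, |f ω| ≤ C) → Integrable f (P[|A n]) := by
    intro n hPn f C hf hC
    haveI : IsProbabilityMeasure (P[|A n]) := cond_isProbabilityMeasure hPn
    exact (integrable_const C).mono' hf.aestronglyMeasurable
      (ae_of_all _ fun ω => by rw [Real.norm_eq_abs]; exact hC ω)
  rw [Metric.tendsto_atTop]
  intro ε hε
  set ε' := ε/5 with hε'def
  have hε' : 0 < ε' := by positivity
  have hAMgen : ∀ y : ℝ, |y| ≤ y^2/(2*ε') + ε'/2 := by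
    intro y
    have h1 : 2*ε'*|y| ≤ y^2 + ε'*ε' := by nlinarith [sq_nonneg (|y| - ε'), sq_abs y]
    have h2 : |y| ≤ (y^2 + ε'*ε')/(2*ε') := by
      rw [le_div_iff₀ (by positivity)]; linarith
    have h3 : (y^2 + ε'*ε')/(2*ε') = y^2/(2*ε') + ε'/2 := by field_simp
    linarith [h3 ▸ h2]
  -- choose the truncation level K
  obtain ⟨K, hKlt⟩ : ∃ K : ℕ, ∫ ω, h (ξ 0 ω) ∂P - ε' < ∫ ω, min (h (ξ 0 ω)) (K:ℝ) ∂P := by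
    have htd : Tendsto (fun K : ℕ => ∫ ω, min (h (ξ 0 ω)) (K:ℝ) ∂P) atTop
        (nhds (∫ ω, h (ξ 0 ω) ∂P)) := by
      refine tendsto_integral_of_dominated_convergence (fun ω => h (ξ 0 ω))
        (fun K => ((hmeasR (fun a => min (h a) (K:ℝ)) 0)).aestronglyMeasurable) hintH
        (fun K => ae_of_all _ fun ω => ?_) (ae_of_all _ fun ω => ?_)
      · rw [Real.norm_eq_abs, abs_of_nonneg (le_min (hnonneg _) (Nat.cast_nonneg K))]
        exact min_le_left _ _
      · refine Filter.Tendsto.congr' ?_ tendsto_const_nhds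
        filter_upwards [tendsto_natCast_atTop_atTop.eventually_ge_atTop (h (ξ 0 ω))] with K hKω
        exact (min_eq_left hKω).symm
    exact (htd.eventually (eventually_gt_nhds (by linarith))).exists
  set q : ℕ → ℝ := fun a => min (h a) (K:ℝ) with hq
  have hq0 : ∀ a, 0 ≤ q a := fun a => le_min (hnonneg a) (Nat.cast_nonneg K)
  have hqK : ∀ a, q a ≤ (K:ℝ) := fun a => min_le_right _ _
  have hqh : ∀ a, q a ≤ h a := fun a => min_le_left _ _
  set r : ℕ → ℝ := fun a => h a - q a with hr
  have hr0 : ∀ a, 0 ≤ r a := fun a => by simp only [hr]; linarith [hqh a]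
  have hqr : ∀ a, h a = q a + r a := fun a => by simp only [hr]; ring
  have hqint : Integrable (fun ω => q (ξ 0 ω)) P := by
    refine hintH.mono' ((hmeasR q 0).aestronglyMeasurable) (ae_of_all _ fun ω => ?_)
    rw [Real.norm_eq_abs, abs_of_nonneg (hq0 _)]
    exact hqh _
  have hrint : Integrable (fun ω => r (ξ 0 ω)) P := hintH.sub hqint
  set m : ℝ := ∫ ω, q (ξ 0 ω) ∂P with hm
  set δ : ℝ := ∫ ω, r (ξ 0 ω) ∂P with hδdef
  have hδestar : δ = ∫ ω, h (ξ 0 ω) ∂P - ∫ ω, q (ξ 0 ω) ∂P := by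
    rw [hδdef, ← integral_sub hintH hqint]
  have hδlt : δ < ε' := by rw [hδestar]; linarith
  have hδ0 : 0 ≤ δ := integral_nonneg (fun ω => hr0 _)
  have hσm : σ2 = m + δ := by rw [σ2eq, hδestar, hm]; ring
  -- limits along the conditional measures, from hcond
  have hqint2 : Integrable (fun ω => q (ξ 0 ω) * q (ξ 1 ω)) P := by
    refine (integrable_const ((K:ℝ)*K)).mono'
      (((hmeasR q 0).mul (hmeasR q 1)).aestronglyMeasurable) (ae_of_all _ fun ω => ?_)
    rw [Real.norm_eq_abs, abs_of_nonneg (mul_nonneg (hq0 _) (hq0 _))]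
    exact mul_le_mul (hqK _) (hqK _) (hq0 _) (Nat.cast_nonneg K)
  have hb : Tendsto (fun n => ∫ ω, q (ξ 0 ω) ∂(P[|A n])) atTop (nhds m) :=
    hcond (fun p => q p.1) (measurable_of_countable _) hqint
  have hmul : ∫ ω, q (ξ 0 ω) * q (ξ 1 ω) ∂P = m * m := by
    have hIF : IndepFun (fun ω => q (ξ 0 ω)) (fun ω => q (ξ 1 ω)) P :=
      (hindep.indepFun (show (0:ℕ) ≠ 1 by omega)).comp
        (measurable_of_countable q) (measurable_of_countable q)
    have h2 : ∫ ω, q (ξ 0 ω) * q (ξ 1 ω) ∂P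
        = (∫ ω, q (ξ 0 ω) ∂P) * ∫ ω, q (ξ 1 ω) ∂P :=
      hIF.integral_fun_mul_eq_mul_integral hqint.aestronglyMeasurable (hintMap q 1 hqint).aestronglyMeasurable
    rw [h2, hIntEq q 1, ← hm]
  have hc : Tendsto (fun n => ∫ ω, q (ξ 0 ω) * q (ξ 1 ω) ∂(P[|A n])) atTop (nhds (m*m)) := by
    have := hcond (fun p => q p.1 * q p.2) (measurable_of_countable _) hqint2
    rwa [hmul] at this
  have hd : Tendsto (fun n => ∫ ω, r (ξ 0 ω) ∂(P[|A n])) atTop (nhds δ) :=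
    hcond (fun p => r p.1) (measurable_of_countable _) hrint
  -- the diagonal term tends to zero
  have haK : Tendsto (fun n : ℕ => (∫ ω, q (ξ 0 ω) * q (ξ 0 ω) ∂(P[|A n])) / n)
      atTop (nhds 0) := by
    refine squeeze_zero' ?_ ?_ (tendsto_const_div_atTop_nhds_zero_nat ((K:ℝ)*K))
    · refine Eventually.of_forall fun n => ?_
      have h0 : 0 ≤ ∫ ω, q (ξ 0 ω) * q (ξ 0 ω) ∂(P[|A n]) :=
        integral_nonneg (fun ω => mul_nonneg (hq0 _) (hq0 _))
      positivity
    · filter_upwards [hpos, eventually_ge_atTop 1] with n hPn hn1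
      haveI : IsProbabilityMeasure (P[|A n]) := cond_isProbabilityMeasure hPn.ne'
      have hub : ∫ ω, q (ξ 0 ω) * q (ξ 0 ω) ∂(P[|A n]) ≤ (K:ℝ)*K := by
        calc ∫ ω, q (ξ 0 ω) * q (ξ 0 ω) ∂(P[|A n])
            ≤ ∫ _ω, (K:ℝ)*K ∂(P[|A n]) := by
              refine integral_mono (hbddc hPn.ne' _ ((K:ℝ)*K)
                ((hmeasR q 0).mul (hmeasR q 0)) (fun ω => ?_)) (integrable_const _)
                (fun ω => ?_)
              · rw [abs_of_nonneg (mul_nonneg (hq0 _) (hq0 _))]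
                exact mul_le_mul (hqK _) (hqK _) (hq0 _) (Nat.cast_nonneg K)
              · exact mul_le_mul (hqK _) (hqK _) (hq0 _) (Nat.cast_nonneg K)
          _ = (K:ℝ)*K := by simp
      have hn0 : (0:ℝ) < n := by exact_mod_cast hn1
      gcongr
  -- convergence of the empirical second moment expression
  have hW : Tendsto (fun n : ℕ => (∫ ω, q (ξ 0 ω) * q (ξ 0 ω) ∂(P[|A n])) / n
      + (1 - 1/(n:ℝ)) * (∫ ω, q (ξ 0 ω) * q (ξ 1 ω) ∂(P[|A n]))
      - 2*m*(∫ ω, q (ξ 0 ω) ∂(P[|A n])) + m^2) atTop (nhds 0) := by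
    have l2 : Tendsto (fun n : ℕ => (1 - 1/(n:ℝ))) atTop (nhds 1) := by
      have h1 := tendsto_one_div_atTop_nhds_zero_nat (𝕜 := ℝ)
      have := (tendsto_const_nhds (x := (1:ℝ)) (f := atTop)).sub h1
      simpa using this
    have total := ((haK.add (l2.mul hc)).sub (Tendsto.const_mul (2*m) hb)).add
      (tendsto_const_nhds (x := m^2) (f := atTop))
    convert total using 2
    ring
  -- variance identity under the conditional measure
  have hVar : ∀ n : ℕ, 2 ≤ n → P (A n) ≠ 0 →
      ∫ ω, ((1/(n:ℝ)) * ∑ i ∈ Finset.range n, q (ξ i ω) - m)^2 ∂(P[|A n])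
        = (∫ ω, q (ξ 0 ω) * q (ξ 0 ω) ∂(P[|A n])) / n
          + (1 - 1/(n:ℝ)) * (∫ ω, q (ξ 0 ω) * q (ξ 1 ω) ∂(P[|A n]))
          - 2*m*(∫ ω, q (ξ 0 ω) ∂(P[|A n])) + m^2 := by
    intro n hn2 hPn
    haveI : IsProbabilityMeasure (P[|A n]) := cond_isProbabilityMeasure hPn
    have hnR : (n:ℝ) ≠ 0 := Nat.cast_ne_zero.mpr (by omega)
    have hUmeas : Measurable (fun ω => (1/(n:ℝ)) * ∑ i ∈ Finset.range n, q (ξ i ω)) :=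
      (Finset.measurable_sum _ fun i _ => hmeasR q i).const_mul _
    have hsumbd : ∀ ω, ∑ i ∈ Finset.range n, q (ξ i ω) ≤ (n:ℝ) * K := by
      intro ω
      calc ∑ i ∈ Finset.range n, q (ξ i ω) ≤ ∑ _i ∈ Finset.range n, (K:ℝ) :=
            Finset.sum_le_sum (fun i _ => hqK _)
        _ = (n:ℝ) * K := by simp [Finset.sum_const, Finset.card_range, mul_comm]
    have hsumnn : ∀ ω, 0 ≤ ∑ i ∈ Finset.range n, q (ξ i ω) :=
      fun ω => Finset.sum_nonneg (fun i _ => hq0 _)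
    have hUbd : ∀ ω, |(1/(n:ℝ)) * ∑ i ∈ Finset.range n, q (ξ i ω)| ≤ (K:ℝ) := by
      intro ω
      rw [abs_of_nonneg (mul_nonneg (by positivity) (hsumnn ω))]
      calc (1/(n:ℝ)) * ∑ i ∈ Finset.range n, q (ξ i ω) ≤ (1/(n:ℝ)) * ((n:ℝ)*K) := by
            refine mul_le_mul_of_nonneg_left (hsumbd ω) (by positivity)
        _ = (K:ℝ) := by field_simp
    have hUint : Integrable (fun ω => (1/(n:ℝ)) * ∑ i ∈ Finset.range n, q (ξ i ω)) (P[|A n]) :=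
      hbddc hPn _ (K:ℝ) hUmeas hUbd
    have hU2int : Integrable (fun ω => ((1/(n:ℝ)) * ∑ i ∈ Finset.range n, q (ξ i ω))
        * ((1/(n:ℝ)) * ∑ i ∈ Finset.range n, q (ξ i ω))) (P[|A n]) := by
      refine hbddc hPn _ ((K:ℝ)*(K:ℝ)) (hUmeas.mul hUmeas) (fun ω => ?_)
      rw [abs_mul]
      exact mul_le_mul (hUbd ω) (hUbd ω) (abs_nonneg _) (Nat.cast_nonneg K)
    have hsplit : ∫ ω, ((1/(n:ℝ)) * ∑ i ∈ Finset.range n, q (ξ i ω) - m)^2 ∂(P[|A n])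
        = ∫ ω, ((1/(n:ℝ)) * ∑ i ∈ Finset.range n, q (ξ i ω))
            * ((1/(n:ℝ)) * ∑ i ∈ Finset.range n, q (ξ i ω)) ∂(P[|A n])
          - 2*m*∫ ω, (1/(n:ℝ)) * ∑ i ∈ Finset.range n, q (ξ i ω) ∂(P[|A n]) + m^2 := by
      have hexp : ∀ ω, ((1/(n:ℝ)) * ∑ i ∈ Finset.range n, q (ξ i ω) - m)^2
          = ((1/(n:ℝ)) * ∑ i ∈ Finset.range n, q (ξ i ω))
              * ((1/(n:ℝ)) * ∑ i ∈ Finset.range n, q (ξ i ω))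
            - 2*m*((1/(n:ℝ)) * ∑ i ∈ Finset.range n, q (ξ i ω)) + m^2 := fun ω => by ring
      simp only [hexp]
      have i3 : Integrable (fun ω => 2*m*((1/(n:ℝ)) * ∑ i ∈ Finset.range n, q (ξ i ω)))
          (P[|A n]) := hUint.const_mul (2*m)
      have i1 : Integrable (fun ω => ((1/(n:ℝ)) * ∑ i ∈ Finset.range n, q (ξ i ω))
          * ((1/(n:ℝ)) * ∑ i ∈ Finset.range n, q (ξ i ω))
          - 2*m*((1/(n:ℝ)) * ∑ i ∈ Finset.range n, q (ξ i ω))) (P[|A n]) := hU2int.sub i3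
      rw [integral_add i1 (integrable_const (m^2)),
        integral_sub hU2int i3, integral_const_mul, integral_const]
      simp
    have hqiint : ∀ i : ℕ, Integrable (fun ω => q (ξ i ω)) (P[|A n]) :=
      fun i => hbddc hPn _ (K:ℝ) (hmeasR q i)
        (fun ω => by rw [abs_of_nonneg (hq0 _)]; exact hqK _)
    have hqijint : ∀ i j : ℕ, Integrable (fun ω => q (ξ i ω) * q (ξ j ω)) (P[|A n]) := by
      intro i j
      refine hbddc hPn _ ((K:ℝ)*(K:ℝ)) ((hmeasR q i).mul (hmeasR q j)) (fun ω => ?_)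
      rw [abs_of_nonneg (mul_nonneg (hq0 _) (hq0 _))]
      exact mul_le_mul (hqK _) (hqK _) (hq0 _) (Nat.cast_nonneg K)
    have hIU : ∫ ω, (1/(n:ℝ)) * ∑ i ∈ Finset.range n, q (ξ i ω) ∂(P[|A n])
        = ∫ ω, q (ξ 0 ω) ∂(P[|A n]) := by
      rw [integral_const_mul, integral_finset_sum _ (fun i _ => hqiint i)]
      rw [Finset.sum_congr rfl (fun i hi =>
        hsingle hn2 (Finset.mem_range.mp hi) q)]
      rw [Finset.sum_const, Finset.card_range, nsmul_eq_mul]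
      field_simp
    have hIUU : ∫ ω, ((1/(n:ℝ)) * ∑ i ∈ Finset.range n, q (ξ i ω))
        * ((1/(n:ℝ)) * ∑ i ∈ Finset.range n, q (ξ i ω)) ∂(P[|A n])
        = (∫ ω, q (ξ 0 ω) * q (ξ 0 ω) ∂(P[|A n])) / n
          + (1 - 1/(n:ℝ)) * (∫ ω, q (ξ 0 ω) * q (ξ 1 ω) ∂(P[|A n])) := by
      have hexpand : ∀ ω, ((1/(n:ℝ)) * ∑ i ∈ Finset.range n, q (ξ i ω))
          * ((1/(n:ℝ)) * ∑ i ∈ Finset.range n, q (ξ i ω))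
          = (1/(n:ℝ))^2 * ∑ i ∈ Finset.range n, ∑ j ∈ Finset.range n,
              q (ξ i ω) * q (ξ j ω) := by
        intro ω
        rw [← Finset.sum_mul_sum]
        ring
      simp only [hexpand]
      rw [integral_const_mul, integral_finset_sum _ (fun i _ =>
        integrable_finset_sum _ (fun j _ => hqijint i j))]
      have hinner : ∀ i ∈ Finset.range n,
          ∫ ω, ∑ j ∈ Finset.range n, q (ξ i ω) * q (ξ j ω) ∂(P[|A n])
          = ∑ j ∈ Finset.range n, ∫ ω, q (ξ i ω) * q (ξ j ω) ∂(P[|A n]) :=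
        fun i _ => integral_finset_sum _ (fun j _ => hqijint i j)
      rw [Finset.sum_congr rfl hinner]
      have hval : ∀ i ∈ Finset.range n, ∀ j ∈ Finset.range n,
          ∫ ω, q (ξ i ω) * q (ξ j ω) ∂(P[|A n])
          = if i = j then ∫ ω, q (ξ 0 ω) * q (ξ 0 ω) ∂(P[|A n])
            else ∫ ω, q (ξ 0 ω) * q (ξ 1 ω) ∂(P[|A n]) := by
        intro i hi j hj
        by_cases hij : i = j
        · subst hij
          rw [if_pos rfl]
          exact hsingle hn2 (Finset.mem_range.mp hi) (fun x => q x * q x)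
        · rw [if_neg hij]
          exact hpair hn2 (Finset.mem_range.mp hi) (Finset.mem_range.mp hj) hij
            (fun x y => q x * q y)
      rw [Finset.sum_congr rfl (fun i hi => Finset.sum_congr rfl (fun j hj => hval i hi j hj))]
      have hrowsum : ∀ i ∈ Finset.range n,
          ∑ j ∈ Finset.range n, (if i = j then ∫ ω, q (ξ 0 ω) * q (ξ 0 ω) ∂(P[|A n])
            else ∫ ω, q (ξ 0 ω) * q (ξ 1 ω) ∂(P[|A n]))
          = (∫ ω, q (ξ 0 ω) * q (ξ 1 ω) ∂(P[|A n])) * n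
            + (∫ ω, q (ξ 0 ω) * q (ξ 0 ω) ∂(P[|A n])
              - ∫ ω, q (ξ 0 ω) * q (ξ 1 ω) ∂(P[|A n])) := by
        intro i hi
        have hsplitij : ∀ j, (if i = j then ∫ ω, q (ξ 0 ω) * q (ξ 0 ω) ∂(P[|A n])
            else ∫ ω, q (ξ 0 ω) * q (ξ 1 ω) ∂(P[|A n]))
            = ∫ ω, q (ξ 0 ω) * q (ξ 1 ω) ∂(P[|A n])
              + (if j = i then (∫ ω, q (ξ 0 ω) * q (ξ 0 ω) ∂(P[|A n])
                - ∫ ω, q (ξ 0 ω) * q (ξ 1 ω) ∂(P[|A n])) else 0) := by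
          intro j
          by_cases hji : j = i
          · subst hji; simp
          · rw [if_neg (Ne.symm hji), if_neg hji]; ring
        simp only [hsplitij]
        rw [Finset.sum_add_distrib, Finset.sum_const, Finset.card_range,
          Finset.sum_ite_eq' (Finset.range n) i
            (fun _ => (∫ ω, q (ξ 0 ω) * q (ξ 0 ω) ∂(P[|A n])
              - ∫ ω, q (ξ 0 ω) * q (ξ 1 ω) ∂(P[|A n]))), if_pos hi, nsmul_eq_mul]
        ring
      rw [Finset.sum_congr rfl hrowsum, Finset.sum_const, Finset.card_range, nsmul_eq_mul]
      field_simp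
      ring
    rw [hsplit, hIU, hIUU]
  -- convergence of the conditional L² distance
  have hUlim : Tendsto (fun n : ℕ =>
      ∫ ω, ((1/(n:ℝ)) * ∑ i ∈ Finset.range n, q (ξ i ω) - m)^2 ∂(P[|A n]))
      atTop (nhds 0) := by
    refine Filter.Tendsto.congr' ?_ hW
    filter_upwards [hpos, eventually_ge_atTop 2] with n hPn hn2
    exact (hVar n hn2 hPn.ne').symm
  -- final assembly
  have hδev : ∀ᶠ n in atTop, ∫ ω, r (ξ 0 ω) ∂(P[|A n]) < ε' := hd.eventually (gt_mem_nhds hδlt)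
  have hUev : ∀ᶠ n in atTop,
      ∫ ω, ((1/(n:ℝ)) * ∑ i ∈ Finset.range n, q (ξ i ω) - m)^2 ∂(P[|A n]) < ε'*ε' :=
    hUlim.eventually (gt_mem_nhds (by positivity))
  have hinv : Tendsto (fun n : ℕ => (1/(n:ℝ))^2) atTop (nhds 0) := by
    have h2 := (tendsto_one_div_atTop_nhds_zero_nat (𝕜 := ℝ)).pow 2
    simpa using h2
  have hsqev : ∀ᶠ n : ℕ in atTop, (1/(n:ℝ))^2 < ε' := hinv.eventually (gt_mem_nhds hε')
  have key : ∀ᶠ n in atTop, dist (∫ ω,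
      |(1 / (n : ℝ)) * ∑ i ∈ Finset.range n, ((ξ i ω : ℝ) - 1 + 1 / (n : ℝ)) ^ 2 - σ2|
      ∂(P[|A n])) 0 < ε := by
    filter_upwards [hpos, eventually_ge_atTop 2, hδev, hUev, hsqev] with n hPn hn2 hdn hU2 hsn
    haveI : IsProbabilityMeasure (P[|A n]) := cond_isProbabilityMeasure hPn.ne'
    have hnR : (n:ℝ) ≠ 0 := Nat.cast_ne_zero.mpr (by omega)
    have hae : ∀ᵐ ω ∂(P[|A n]), ω ∈ A n := by
      have h1 : ∀ᵐ ω ∂(P.restrict (A n)), ω ∈ A n := ae_restrict_mem (hAmeas n)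
      exact Measure.ae_smul_measure h1 (P (A n))⁻¹
    have heq : ∫ ω, |(1 / (n:ℝ)) * ∑ i ∈ Finset.range n,
          ((ξ i ω : ℝ) - 1 + 1/(n:ℝ))^2 - σ2| ∂(P[|A n])
        = ∫ ω, |((1/(n:ℝ)) * ∑ i ∈ Finset.range n, h (ξ i ω) - (1/(n:ℝ))^2) - σ2|
            ∂(P[|A n]) := by
      refine integral_congr_ae ?_
      filter_upwards [hae] with ω hω
      have hωA : ∑ i ∈ Finset.range n, ξ i ω = n - 1 := by rw [hA n] at hω; exact hω
      have hsumR : ∑ i ∈ Finset.range n, (ξ i ω : ℝ) = (n:ℝ) - 1 := by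
        have hc := congrArg (fun k : ℕ => (k:ℝ)) hωA
        push_cast [Nat.cast_sub (show 1 ≤ n by omega)] at hc
        simpa using hc
      have hterm : ∀ a : ℕ, ((a:ℝ) - 1 + 1/(n:ℝ))^2
          = h a + ((2/(n:ℝ))*(a:ℝ) + ((1/(n:ℝ))^2 - 2/(n:ℝ))) := by
        intro a; simp only [hh]; ring
      congr 1
      rw [Finset.sum_congr rfl (fun i _ => hterm (ξ i ω)), Finset.sum_add_distrib,
        Finset.sum_add_distrib, ← Finset.mul_sum, hsumR, Finset.sum_const, Finset.card_range,
        nsmul_eq_mul]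
      field_simp
      ring
    rw [Real.dist_eq, sub_zero, abs_of_nonneg (integral_nonneg fun ω => abs_nonneg _), heq]
    have hHiint : ∀ i : ℕ, Integrable (fun ω => h (ξ i ω)) (P[|A n]) :=
      fun i => condIntg hPn.ne' (hintMap h i hintH)
    have hRiint : ∀ i : ℕ, Integrable (fun ω => r (ξ i ω)) (P[|A n]) :=
      fun i => condIntg hPn.ne' (hintMap r i hrint)
    have hTint : Integrable (fun ω =>
        ((1/(n:ℝ)) * ∑ i ∈ Finset.range n, h (ξ i ω) - (1/(n:ℝ))^2) - σ2) (P[|A n]) :=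
      (((integrable_finset_sum _ (fun i _ => hHiint i)).const_mul _).sub
        (integrable_const _)).sub (integrable_const _)
    have hUmeas : Measurable (fun ω => (1/(n:ℝ)) * ∑ i ∈ Finset.range n, q (ξ i ω)) :=
      (Finset.measurable_sum _ fun i _ => hmeasR q i).const_mul _
    have hUmbd : ∀ ω, |(1/(n:ℝ)) * ∑ i ∈ Finset.range n, q (ξ i ω) - m| ≤ (K:ℝ) + |m| := by
      intro ω
      have h1 : |(1/(n:ℝ)) * ∑ i ∈ Finset.range n, q (ξ i ω)| ≤ (K:ℝ) := by
        rw [abs_of_nonneg (mul_nonneg (by positivity)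
          (Finset.sum_nonneg (fun i _ => hq0 _)))]
        calc (1/(n:ℝ)) * ∑ i ∈ Finset.range n, q (ξ i ω)
            ≤ (1/(n:ℝ)) * ((n:ℝ)*K) := by
              refine mul_le_mul_of_nonneg_left ?_ (by positivity)
              calc ∑ i ∈ Finset.range n, q (ξ i ω) ≤ ∑ _i ∈ Finset.range n, (K:ℝ) :=
                    Finset.sum_le_sum (fun i _ => hqK _)
                _ = (n:ℝ) * K := by simp [Finset.sum_const, Finset.card_range, mul_comm]
          _ = (K:ℝ) := by field_simp
      calc |(1/(n:ℝ)) * ∑ i ∈ Finset.range n, q (ξ i ω) - m|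
          ≤ |(1/(n:ℝ)) * ∑ i ∈ Finset.range n, q (ξ i ω)| + |m| := abs_sub _ _
        _ ≤ (K:ℝ) + |m| := by linarith
    have hUmint : Integrable
        (fun ω => |(1/(n:ℝ)) * ∑ i ∈ Finset.range n, q (ξ i ω) - m|) (P[|A n]) :=
      (hbddc hPn.ne' _ ((K:ℝ)+|m|) (hUmeas.sub measurable_const) hUmbd).abs
    have hptw : ∀ ω, |((1/(n:ℝ)) * ∑ i ∈ Finset.range n, h (ξ i ω) - (1/(n:ℝ))^2) - σ2|
        ≤ |(1/(n:ℝ)) * ∑ i ∈ Finset.range n, q (ξ i ω) - m|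
          + ((1/(n:ℝ)) * ∑ i ∈ Finset.range n, r (ξ i ω) + (δ + (1/(n:ℝ))^2)) := by
      intro ω
      have hsplitT : (1/(n:ℝ)) * ∑ i ∈ Finset.range n, h (ξ i ω)
          = (1/(n:ℝ)) * ∑ i ∈ Finset.range n, q (ξ i ω)
            + (1/(n:ℝ)) * ∑ i ∈ Finset.range n, r (ξ i ω) := by
        rw [Finset.sum_congr rfl (fun i _ => hqr (ξ i ω)), Finset.sum_add_distrib]
        ring
      have hRnn : 0 ≤ (1/(n:ℝ)) * ∑ i ∈ Finset.range n, r (ξ i ω) :=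
        mul_nonneg (by positivity) (Finset.sum_nonneg (fun i _ => hr0 _))
      have h1 := le_abs_self ((1/(n:ℝ)) * ∑ i ∈ Finset.range n, q (ξ i ω) - m)
      have h2 := neg_abs_le ((1/(n:ℝ)) * ∑ i ∈ Finset.range n, q (ξ i ω) - m)
      have hs2 : (0:ℝ) ≤ (1/(n:ℝ))^2 := by positivity
      rw [hsplitT, hσm, abs_le]
      constructor
      · linarith
      · linarith
    have hint2 : Integrable (fun ω => (1/(n:ℝ)) * ∑ i ∈ Finset.range n, r (ξ i ω)
        + (δ + (1/(n:ℝ))^2)) (P[|A n]) :=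
      ((integrable_finset_sum _ (fun i _ => hRiint i)).const_mul _).add (integrable_const _)
    have hchain : ∫ ω, |((1/(n:ℝ)) * ∑ i ∈ Finset.range n, h (ξ i ω) - (1/(n:ℝ))^2) - σ2|
          ∂(P[|A n])
        ≤ ∫ ω, (|(1/(n:ℝ)) * ∑ i ∈ Finset.range n, q (ξ i ω) - m|
          + ((1/(n:ℝ)) * ∑ i ∈ Finset.range n, r (ξ i ω) + (δ + (1/(n:ℝ))^2))) ∂(P[|A n]) :=
      integral_mono hTint.abs (hUmint.add hint2) hptw
    rw [integral_add hUmint hint2,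
      integral_add ((integrable_finset_sum _ (fun i _ => hRiint i)).const_mul _)
        (integrable_const _), integral_const] at hchain
    simp only [measure_univ, probReal_univ, ENNReal.toReal_one, one_smul] at hchain
    have hRval : ∫ ω, (1/(n:ℝ)) * ∑ i ∈ Finset.range n, r (ξ i ω) ∂(P[|A n])
        = ∫ ω, r (ξ 0 ω) ∂(P[|A n]) := by
      rw [integral_const_mul, integral_finset_sum _ (fun i _ => hRiint i),
        Finset.sum_congr rfl (fun i hi => hsingle hn2 (Finset.mem_range.mp hi) r),
        Finset.sum_const, Finset.card_range, nsmul_eq_mul]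
      field_simp
    rw [hRval] at hchain
    have hAM : ∀ ω, |(1/(n:ℝ)) * ∑ i ∈ Finset.range n, q (ξ i ω) - m|
        ≤ ((1/(n:ℝ)) * ∑ i ∈ Finset.range n, q (ξ i ω) - m)^2/(2*ε') + ε'/2 := by
      intro ω
      exact hAMgen _
    have hsq2int : Integrable
        (fun ω => ((1/(n:ℝ)) * ∑ i ∈ Finset.range n, q (ξ i ω) - m)^2) (P[|A n]) := by
      refine hbddc hPn.ne' _ (((K:ℝ)+|m|)^2) ((hUmeas.sub measurable_const).pow_const 2)
        (fun ω => ?_)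
      rw [abs_pow]
      exact pow_le_pow_left₀ (abs_nonneg _) (hUmbd ω) 2
    have hsqint : Integrable (fun ω =>
        ((1/(n:ℝ)) * ∑ i ∈ Finset.range n, q (ξ i ω) - m)^2/(2*ε') + ε'/2) (P[|A n]) :=
      (hsq2int.div_const _).add (integrable_const _)
    have hIabs : ∫ ω, |(1/(n:ℝ)) * ∑ i ∈ Finset.range n, q (ξ i ω) - m| ∂(P[|A n])
        ≤ (∫ ω, ((1/(n:ℝ)) * ∑ i ∈ Finset.range n, q (ξ i ω) - m)^2 ∂(P[|A n]))/(2*ε')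
          + ε'/2 := by
      calc ∫ ω, |(1/(n:ℝ)) * ∑ i ∈ Finset.range n, q (ξ i ω) - m| ∂(P[|A n])
          ≤ ∫ ω, (((1/(n:ℝ)) * ∑ i ∈ Finset.range n, q (ξ i ω) - m)^2/(2*ε') + ε'/2)
              ∂(P[|A n]) := integral_mono hUmint hsqint hAM
        _ = _ := by
            rw [integral_add (hsq2int.div_const _) (integrable_const _), integral_div,
              integral_const]
            simp [measure_univ]
    have h3 : (∫ ω, ((1/(n:ℝ)) * ∑ i ∈ Finset.range n, q (ξ i ω) - m)^2 ∂(P[|A n]))/(2*ε')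
        < ε'/2 := by
      rw [div_lt_iff₀ (by positivity)]
      have hring : ε'/2*(2*ε') = ε'*ε' := by ring
      linarith [hU2]
    have hεsum : ε' = ε/5 := hε'def
    linarith [hchain, hIabs, h3, hdn, hsn, hδlt]

  exact eventually_atTop.mp key
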